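/- arXiv:2503.10587 — 3 statements merged into one kernel-verified Lean document; each statement's English description precedes it below -/
import Mathlib

section
/- For a single ReLU neuron trained by gradient flow on any differentiable loss L(θ) = ℓ(f_θ) depending on θ = (w, b, v) only through the function f_θ(x) = v · max(⟨w,x⟩ + b, 0), the quantity δ = v² − ‖w‖² − b² is invariant: d/dt (v(t)² − ‖w(t)‖² − b(t)²) = 0 along gradient flow trajectories. -/
open MeasureTheory
open scoped RealInnerProductSpace

/-- Along gradient-flow trajectories of a single ReLU neuron, for a loss
`L(w,b,v) = ∑ₙ ℓₙ(v · max(⟨w,xₙ⟩ + b, 0))` depending on the parameters only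
through the network function, the quantity `δ = v² − ‖w‖² − b²` is conserved. -/
theorem relu_gradient_flow_delta_invariant
    (D N : ℕ) (x : Fin N → EuclideanSpace ℝ (Fin D))
    (ℓ : Fin N → ℝ → ℝ) (hℓ : ∀ n, Differentiable ℝ (ℓ n))
    (L : EuclideanSpace ℝ (Fin D) → ℝ → ℝ → ℝ)
    (hL : ∀ ω β ν, L ω β ν = ∑ n, ℓ n (ν * max (⟪ω, x n⟫ + β) 0))
    (w : ℝ → EuclideanSpace ℝ (Fin D)) (b v : ℝ → ℝ)
    (w' : ℝ → EuclideanSpace ℝ (Fin D)) (b' v' : ℝ → ℝ)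
    (hw : ∀ t, HasDerivAt w (w' t) t)
    (hb : ∀ t, HasDerivAt b (b' t) t)
    (hv : ∀ t, HasDerivAt v (v' t) t)
    (hgw : ∀ t, ∀ u : EuclideanSpace ℝ (Fin D),
      ⟪w' t, u⟫ = - fderiv ℝ (fun ω => L ω (b t) (v t)) (w t) u)
    (hgb : ∀ t, b' t = - deriv (fun β => L (w t) β (v t)) (b t))
    (hgv : ∀ t, v' t = - deriv (fun ν => L (w t) (b t) ν) (v t))
    (hne : ∀ t, ∀ n, ⟪w t, x n⟫ + b t ≠ 0) :
    ∀ t, HasDerivAt (fun s => (v s) ^ 2 - ‖w s‖ ^ 2 - (b s) ^ 2) 0 t := by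
  intro t
  -- abbreviations
  set g : Fin N → ℝ := fun n => ⟪w t, x n⟫ + b t with hg
  set c : Fin N → ℝ := fun n => deriv (ℓ n) (v t * max (g n) 0) with hc
  set s : Fin N → ℝ := fun n => if 0 < g n then 1 else 0 with hs
  have hsg : ∀ n, s n * g n = max (g n) 0 := by
    intro n
    by_cases h : 0 < g n
    · simp [hs, h, max_eq_left h.le]
    · have h' : g n < 0 := lt_of_le_of_ne (not_lt.mp h) (hne t n)
      simp [hs, h, max_eq_right h'.le]
  -- derivative in ν
  have hDv : HasDerivAt (fun ν => L (w t) (b t) ν)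
      (∑ n, c n * max (g n) 0) (v t) := by
    have he : (fun ν => L (w t) (b t) ν)
        = fun ν => ∑ n, ℓ n (ν * max (g n) 0) := funext fun ν => hL _ _ ν
    rw [he]
    apply HasDerivAt.fun_sum
    intro n _
    have h1 : HasDerivAt (fun ν : ℝ => ν * max (g n) 0) (max (g n) 0) (v t) :=
      hasDerivAt_mul_const _
    exact ((hℓ n (v t * max (g n) 0)).hasDerivAt).comp (v t) h1
  -- derivative in β
  have hDb : HasDerivAt (fun β => L (w t) β (v t))
      (∑ n, c n * (v t * s n)) (b t) := by
    have he : (fun β => L (w t) β (v t))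
        = fun β => ∑ n, ℓ n (v t * max (⟪w t, x n⟫ + β) 0) := funext fun β => hL _ _ _
    rw [he]
    apply HasDerivAt.fun_sum
    intro n _
    by_cases h : 0 < g n
    · have hev : (fun β => ℓ n (v t * max (⟪w t, x n⟫ + β) 0))
          =ᶠ[nhds (b t)] fun β => ℓ n (v t * (⟪w t, x n⟫ + β)) := by
        have hcont : ContinuousAt (fun β : ℝ => ⟪w t, x n⟫ + β) (b t) := by
          fun_prop
        have := hcont.eventually_mem (Ioi_mem_nhds h)
        filter_upwards [this] with β hβ
        rw [max_eq_left (le_of_lt hβ)]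
      have hbase : HasDerivAt (fun β => ℓ n (v t * (⟪w t, x n⟫ + β)))
          (deriv (ℓ n) (v t * (⟪w t, x n⟫ + b t)) * (v t * 1)) (b t) := by
        have h2 : HasDerivAt (fun β : ℝ => v t * (⟪w t, x n⟫ + β)) (v t * 1) (b t) :=
          ((hasDerivAt_id (b t)).const_add _).const_mul (v t)
        exact ((hℓ n _).hasDerivAt).comp (b t) h2
      have := hbase.congr_of_eventuallyEq hev
      refine this.congr_deriv (Eq.symm ?_)
      simp only [hc, hs, if_pos (show 0 < ⟪w t, x n⟫ + b t from h), hg]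
      rw [max_eq_left (le_of_lt h)]
    · have h' : g n < 0 := lt_of_le_of_ne (not_lt.mp h) (hne t n)
      have hev : (fun β => ℓ n (v t * max (⟪w t, x n⟫ + β) 0))
          =ᶠ[nhds (b t)] fun _ => ℓ n (v t * 0) := by
        have hcont : ContinuousAt (fun β : ℝ => ⟪w t, x n⟫ + β) (b t) := by
          fun_prop
        have := hcont.eventually_mem (Iio_mem_nhds h')
        filter_upwards [this] with β hβ
        rw [max_eq_right (le_of_lt hβ)]
      have hbase : HasDerivAt (fun _ : ℝ => ℓ n (v t * 0)) 0 (b t) := hasDerivAt_const _ _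
      have := hbase.congr_of_eventuallyEq hev
      convert this using 1
      simp [hs, if_neg h]
  -- fderiv in ω
  have hDw : HasFDerivAt (fun ω => L ω (b t) (v t))
      (∑ n, (c n * (v t * s n)) • innerSL ℝ (x n)) (w t) := by
    have he : (fun ω : EuclideanSpace ℝ (Fin D) => L ω (b t) (v t))
        = fun ω => ∑ n, ℓ n (v t * max (⟪ω, x n⟫ + b t) 0) := funext fun ω => hL _ _ _
    rw [he]
    apply HasFDerivAt.fun_sum
    intro n _
    by_cases h : 0 < g n
    · have hev : (fun ω : EuclideanSpace ℝ (Fin D) => ℓ n (v t * max (⟪ω, x n⟫ + b t) 0))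
          =ᶠ[nhds (w t)] fun ω => ℓ n (v t * (⟪ω, x n⟫ + b t)) := by
        have hcont : ContinuousAt (fun ω : EuclideanSpace ℝ (Fin D) => ⟪ω, x n⟫ + b t) (w t) :=
          ((continuous_id.inner continuous_const).add continuous_const).continuousAt
        have := hcont.eventually_mem (Ioi_mem_nhds h)
        filter_upwards [this] with ω hω
        rw [max_eq_left (le_of_lt hω)]
      have hinner : HasFDerivAt (fun ω : EuclideanSpace ℝ (Fin D) => v t * (⟪ω, x n⟫ + b t))
          (v t • (innerSL ℝ (x n))) (w t) := by
        have h0 : (fun ω : EuclideanSpace ℝ (Fin D) => ⟪ω, x n⟫ + b t)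
            = fun ω => (innerSL ℝ (x n)) ω + b t := by
          funext ω; rw [innerSL_apply_apply, real_inner_comm]
        have h1 : HasFDerivAt (fun ω : EuclideanSpace ℝ (Fin D) => ⟪ω, x n⟫ + b t)
            (innerSL ℝ (x n)) (w t) := by
          rw [h0]; exact ((innerSL ℝ (x n)).hasFDerivAt).add_const _
        exact h1.const_mul (v t)
      have hbase : HasFDerivAt (fun ω : EuclideanSpace ℝ (Fin D) => ℓ n (v t * (⟪ω, x n⟫ + b t)))
          (deriv (ℓ n) (v t * (⟪w t, x n⟫ + b t)) • (v t • innerSL ℝ (x n))) (w t) :=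
        ((hℓ n _).hasDerivAt).comp_hasFDerivAt (w t) hinner
      have := hbase.congr_of_eventuallyEq hev
      refine this.congr_fderiv (Eq.symm ?_)
      simp only [hc, hs, if_pos (show 0 < ⟪w t, x n⟫ + b t from h), hg]
      rw [max_eq_left (le_of_lt h), smul_smul]
      rw [mul_one]
    · have h' : g n < 0 := lt_of_le_of_ne (not_lt.mp h) (hne t n)
      have hev : (fun ω : EuclideanSpace ℝ (Fin D) => ℓ n (v t * max (⟪ω, x n⟫ + b t) 0))
          =ᶠ[nhds (w t)] fun _ => ℓ n (v t * 0) := by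
        have hcont : ContinuousAt (fun ω : EuclideanSpace ℝ (Fin D) => ⟪ω, x n⟫ + b t) (w t) :=
          ((continuous_id.inner continuous_const).add continuous_const).continuousAt
        have := hcont.eventually_mem (Iio_mem_nhds h')
        filter_upwards [this] with ω hω
        rw [max_eq_right (le_of_lt hω)]
      have hbase : HasFDerivAt (fun _ : EuclideanSpace ℝ (Fin D) => ℓ n (v t * 0))
          (0 : EuclideanSpace ℝ (Fin D) →L[ℝ] ℝ) (w t) := hasFDerivAt_const _ _
      have := hbase.congr_of_eventuallyEq hev
      refine this.congr_fderiv (Eq.symm ?_)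
      simp [hs, if_neg h]
  -- values of the gradient flow velocities
  have hv' : v' t = -∑ n, c n * max (g n) 0 := by rw [hgv t, hDv.deriv]
  have hb' : b' t = -∑ n, c n * (v t * s n) := by rw [hgb t, hDb.deriv]
  have hw' : ⟪w' t, w t⟫ = -∑ n, c n * (v t * s n) * ⟪w t, x n⟫ := by
    rw [hgw t (w t), hDw.fderiv]
    congr 1
    rw [ContinuousLinearMap.sum_apply]
    refine Finset.sum_congr rfl fun n _ => ?_
    simp only [ContinuousLinearMap.smul_apply, innerSL_apply_apply, smul_eq_mul]
    rw [real_inner_comm]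
  -- the derivative of each component
  have hvsq : HasDerivAt (fun s => (v s) ^ 2) (2 * v t * v' t) t := by
    have := (hv t).pow 2
    exact this.congr_deriv (by ring)
  have hwsq : HasDerivAt (fun s => ‖w s‖ ^ 2) (2 * ⟪w' t, w t⟫) t := by
    have h0 : (fun s => ‖w s‖ ^ 2) = fun s => ⟪w s, w s⟫ := by
      funext s; rw [real_inner_self_eq_norm_sq]
    rw [h0]
    have := (hw t).inner ℝ (hw t)
    exact this.congr_deriv (by rw [real_inner_comm (w t) (w' t)]; ring)
  have hbsq : HasDerivAt (fun s => (b s) ^ 2) (2 * b t * b' t) t := by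
    have := (hb t).pow 2
    exact this.congr_deriv (by ring)
  have htotal := (hvsq.sub hwsq).sub hbsq
  refine htotal.congr_deriv (Eq.symm ?_)
  rw [hv', hb', hw']
  have key : ∀ n, v t * (c n * max (g n) 0) =
      c n * (v t * s n) * ⟪w t, x n⟫ + b t * (c n * (v t * s n)) := by
    intro n
    rw [← hsg n]
    simp only [hg]
    ring
  have hsum : ∑ n, v t * (c n * max (g n) 0)
      = (∑ n, c n * (v t * s n) * ⟪w t, x n⟫) + ∑ n, b t * (c n * (v t * s n)) := by
    rw [← Finset.sum_add_distrib]
    exact Finset.sum_congr rfl fun n _ => key n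
  have e1 : v t * ∑ n, c n * max (g n) 0 = ∑ n, v t * (c n * max (g n) 0) :=
    Finset.mul_sum _ _ _
  have e2 : b t * ∑ n, c n * (v t * s n) = ∑ n, b t * (c n * (v t * s n)) :=
    Finset.mul_sum _ _ _
  linear_combination 2 * e1 + 2 * hsum - 2 * e2
end

section
/- Weighted Fourier slice identity: for f : ℝ^D → ℂ and a measurable even function h : ℝ → ℂ with |h(−ϑ)| = |h(ϑ)|, one has ∫_{S^{D-1}} ∫_ℝ |h(ϑ) 𝓕_D[f](ϑ ξ)|² dϑ dξ = 2 ∫_{ℝ^D} |h(‖k‖)|² ‖k‖^{-(D-1)} |𝓕_D[f](k)|² dk, whenever the right side is finite. -/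
open MeasureTheory
open scoped FourierTransform
open MeasureTheory Measure Set Metric
open scoped ENNReal NNReal Pointwise

private lemma ioiPow_integral (n : ℕ) (φ : ℝ → ℝ) :
    (∫ p : Ioi (0:ℝ), φ p ∂(Measure.volumeIoiPow n)) = ∫ r in Ioi (0:ℝ), r ^ n * φ r := by
  rw [Measure.volumeIoiPow]
  simp only [ENNReal.ofReal]
  rw [integral_withDensity_eq_integral_smul
      ((measurable_subtype_coe.pow_const _).real_toNNReal) (fun p : Ioi (0:ℝ) => φ p),
    integral_subtype_comap measurableSet_Ioi (fun a : ℝ => Real.toNNReal (a ^ n) • φ a)]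
  refine setIntegral_congr_fun measurableSet_Ioi fun r hr => ?_
  rw [NNReal.smul_def, Real.coe_toNNReal _ (pow_nonneg (le_of_lt hr) _), smul_eq_mul]

private lemma ioiPow_integrable_iff (n : ℕ) (φ : ℝ → ℝ) :
    Integrable (fun p : Ioi (0:ℝ) => φ p) (Measure.volumeIoiPow n) ↔
      IntegrableOn (fun r : ℝ => r ^ n * φ r) (Ioi 0) := by
  rw [Measure.volumeIoiPow]
  simp only [ENNReal.ofReal]
  rw [integrable_withDensity_iff_integrable_smul
      ((measurable_subtype_coe.pow_const _).real_toNNReal)]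
  have key : Integrable ((fun a : ℝ => Real.toNNReal (a ^ n) • φ a) ∘
        (Subtype.val : Ioi (0:ℝ) → ℝ)) ((volume : Measure ℝ).comap Subtype.val) ↔
      IntegrableOn (fun a : ℝ => Real.toNNReal (a ^ n) • φ a) (Ioi 0) := by
    rw [← (MeasurableEmbedding.subtype_coe measurableSet_Ioi).integrable_map_iff,
      map_comap_subtype_coe measurableSet_Ioi]
    rfl
  refine Iff.trans (Iff.trans (Iff.of_eq rfl) key) ?_
  exact integrableOn_congr_fun (fun r hr => by
    rw [NNReal.smul_def, Real.coe_toNNReal _ (pow_nonneg (le_of_lt hr) _), smul_eq_mul])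
    measurableSet_Ioi

private lemma polar_aux (D : ℕ) (hD : 1 ≤ D) (u : EuclideanSpace ℝ (Fin D) → ℝ)
    (hint : Integrable (fun k : EuclideanSpace ℝ (Fin D) => ‖k‖ ^ (-((D : ℝ) - 1)) * u k)) :
    ((∫ k : EuclideanSpace ℝ (Fin D), ‖k‖ ^ (-((D : ℝ) - 1)) * u k)
      = ∫ ξ : sphere (0 : EuclideanSpace ℝ (Fin D)) 1,
          (∫ r in Ioi (0:ℝ), u (r • (ξ : EuclideanSpace ℝ (Fin D))))
          ∂(volume : Measure (EuclideanSpace ℝ (Fin D))).toSphere)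
    ∧ Integrable (fun ξ : sphere (0 : EuclideanSpace ℝ (Fin D)) 1 =>
        ∫ r in Ioi (0:ℝ), u (r • (ξ : EuclideanSpace ℝ (Fin D))))
        ((volume : Measure (EuclideanSpace ℝ (Fin D))).toSphere)
    ∧ ∀ᵐ ξ : sphere (0 : EuclideanSpace ℝ (Fin D)) 1
        ∂(volume : Measure (EuclideanSpace ℝ (Fin D))).toSphere,
        IntegrableOn (fun r : ℝ => u (r • (ξ : EuclideanSpace ℝ (Fin D)))) (Ioi 0) := by
  have hcast : (((D - 1 : ℕ)) : ℝ) = (D : ℝ) - 1 := by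
    rw [Nat.cast_sub hD]; simp
  haveI : Nonempty (Fin D) := ⟨⟨0, hD⟩⟩
  haveI : Nontrivial (EuclideanSpace ℝ (Fin D)) := by
    unfold EuclideanSpace PiLp
    infer_instance
  set v : EuclideanSpace ℝ (Fin D) → ℝ := fun k => ‖k‖ ^ (-((D : ℝ) - 1)) * u k with hv
  have MP := (volume : Measure (EuclideanSpace ℝ (Fin D))).measurePreserving_homeomorphUnitSphereProd
  rw [show Module.finrank ℝ (EuclideanSpace ℝ (Fin D)) = D from finrank_euclideanSpace_fin] at MP
  set G : sphere (0 : EuclideanSpace ℝ (Fin D)) 1 × Ioi (0:ℝ) → ℝ :=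
    fun p => v ((p.2 : ℝ) • (p.1 : EuclideanSpace ℝ (Fin D))) with hG
  have hc : MeasurableSet ({0}ᶜ : Set (EuclideanSpace ℝ (Fin D))) :=
    (measurableSet_singleton 0).compl
  have hGcomp : (G ∘ (homeomorphUnitSphereProd (EuclideanSpace ℝ (Fin D))))
      = fun x : ({0}ᶜ : Set (EuclideanSpace ℝ (Fin D))) => v x := by
    funext x
    have h1 : (((homeomorphUnitSphereProd (EuclideanSpace ℝ (Fin D))).symm
        ((homeomorphUnitSphereProd _) x) : ({0}ᶜ : Set (EuclideanSpace ℝ (Fin D))))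
          : EuclideanSpace ℝ (Fin D)) = x := by
      rw [Homeomorph.symm_apply_apply]
    show v _ = v x
    rw [← homeomorphUnitSphereProd_symm_apply_coe, h1]
  have hsub : Integrable ((fun k => v k) ∘ (Subtype.val : ({0}ᶜ : Set (EuclideanSpace ℝ (Fin D))) → _))
      ((volume : Measure (EuclideanSpace ℝ (Fin D))).comap Subtype.val) := by
    rw [← (MeasurableEmbedding.subtype_coe hc).integrable_map_iff, map_comap_subtype_coe hc]
    exact hint.integrableOn
  have hGint : Integrable G
      ((volume : Measure (EuclideanSpace ℝ (Fin D))).toSphere.prod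
        (Measure.volumeIoiPow (D - 1))) := by
    rw [← MP.integrable_comp_emb (Homeomorph.measurableEmbedding _), hGcomp]
    exact hsub
  -- pointwise fact on rays
  have hptwise : ∀ (ξ : sphere (0 : EuclideanSpace ℝ (Fin D)) 1) (r : ℝ), r ∈ Ioi (0:ℝ) →
      r ^ (D - 1) * v (r • (ξ : EuclideanSpace ℝ (Fin D)))
        = u (r • (ξ : EuclideanSpace ℝ (Fin D))) := by
    intro ξ r hr
    have hr0 : (0:ℝ) < r := hr
    have hnorm : ‖r • (ξ : EuclideanSpace ℝ (Fin D))‖ = r := by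
      rw [norm_smul, Real.norm_eq_abs, abs_of_pos hr0,
        mem_sphere_zero_iff_norm.mp ξ.2, mul_one]
    rw [hv]
    dsimp only
    rw [hnorm, ← mul_assoc, ← Real.rpow_natCast r (D - 1), hcast,
      ← Real.rpow_add hr0, add_neg_cancel, Real.rpow_zero, one_mul]
  -- inner integral identity
  have hinner : ∀ ξ : sphere (0 : EuclideanSpace ℝ (Fin D)) 1,
      (∫ p : Ioi (0:ℝ), G (ξ, p) ∂(Measure.volumeIoiPow (D - 1)))
        = ∫ r in Ioi (0:ℝ), u (r • (ξ : EuclideanSpace ℝ (Fin D))) := by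
    intro ξ
    rw [show (fun p : Ioi (0:ℝ) => G (ξ, p))
        = fun p : Ioi (0:ℝ) => (fun r : ℝ => v (r • (ξ : EuclideanSpace ℝ (Fin D)))) p from rfl,
      ioiPow_integral (D - 1) (fun r : ℝ => v (r • (ξ : EuclideanSpace ℝ (Fin D))))]
    exact setIntegral_congr_fun measurableSet_Ioi fun r hr => hptwise ξ r hr
  have main : (∫ k : EuclideanSpace ℝ (Fin D), v k)
      = ∫ ξ : sphere (0 : EuclideanSpace ℝ (Fin D)) 1,
          (∫ r in Ioi (0:ℝ), u (r • (ξ : EuclideanSpace ℝ (Fin D))))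
          ∂(volume : Measure (EuclideanSpace ℝ (Fin D))).toSphere := by
    calc ∫ k, v k = ∫ k in ({0}ᶜ : Set (EuclideanSpace ℝ (Fin D))), v k := by
          rw [MeasureTheory.restrict_compl_singleton]
      _ = ∫ x : ({0}ᶜ : Set (EuclideanSpace ℝ (Fin D))), v x
            ∂((volume : Measure (EuclideanSpace ℝ (Fin D))).comap Subtype.val) :=
          (integral_subtype_comap hc _).symm
      _ = ∫ z, G z ∂((volume : Measure (EuclideanSpace ℝ (Fin D))).toSphere.prod
            (Measure.volumeIoiPow (D - 1))) := by
          rw [← MP.integral_comp (Homeomorph.measurableEmbedding _) G]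
          exact integral_congr_ae (Filter.Eventually.of_forall fun x => (congrFun hGcomp x).symm)
      _ = ∫ ξ : sphere (0 : EuclideanSpace ℝ (Fin D)) 1,
            (∫ p : Ioi (0:ℝ), G (ξ, p) ∂(Measure.volumeIoiPow (D - 1)))
            ∂(volume : Measure (EuclideanSpace ℝ (Fin D))).toSphere :=
          integral_prod G hGint
      _ = _ := integral_congr_ae (Filter.Eventually.of_forall hinner)
  refine ⟨main, ?_, ?_⟩
  · have := hGint.integral_prod_left
    exact this.congr (Filter.Eventually.of_forall hinner)
  · filter_upwards [hGint.prod_right_ae] with ξ hξ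
    have h2 : IntegrableOn (fun r : ℝ => r ^ (D - 1) *
        (fun r : ℝ => v (r • (ξ : EuclideanSpace ℝ (Fin D)))) r) (Ioi 0) :=
      (ioiPow_integrable_iff (D - 1) _).mp hξ
    exact (integrableOn_congr_fun (fun r hr => hptwise ξ r hr) measurableSet_Ioi).mp h2


/-- Weighted Fourier slice identity: for a measurable weight `h` with
`‖h(−ϑ)‖ = ‖h(ϑ)‖`, integrating `‖h(ϑ) 𝓕f(ϑξ)‖²` over sphere directions and
signed radii equals `2 ∫ ‖h(‖k‖)‖² ‖k‖^{-(D-1)} ‖𝓕f(k)‖² dk`. -/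
theorem weighted_fourier_slice_identity
    (D : ℕ) (hD : 1 ≤ D)
    (f : EuclideanSpace ℝ (Fin D) → ℂ)
    (h : ℝ → ℂ) (hmeas : Measurable h) (heven : ∀ ϑ : ℝ, ‖h (-ϑ)‖ = ‖h ϑ‖)
    (hfin : Integrable
      (fun k : EuclideanSpace ℝ (Fin D) =>
        ‖h ‖k‖‖ ^ 2 * ‖k‖ ^ (-((D : ℝ) - 1)) * ‖𝓕 f k‖ ^ 2)) :
    (∫ ξ : Metric.sphere (0 : EuclideanSpace ℝ (Fin D)) 1,
        (∫ ϑ : ℝ, ‖h ϑ * 𝓕 f (ϑ • (ξ : EuclideanSpace ℝ (Fin D)))‖ ^ 2)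
        ∂(volume : Measure (EuclideanSpace ℝ (Fin D))).toSphere)
      = 2 * ∫ k : EuclideanSpace ℝ (Fin D),
          ‖h ‖k‖‖ ^ 2 * ‖k‖ ^ (-((D : ℝ) - 1)) * ‖𝓕 f k‖ ^ 2 := by
  have hint_u : Integrable (fun k : EuclideanSpace ℝ (Fin D) =>
      ‖k‖ ^ (-((D : ℝ) - 1)) * (‖h ‖k‖‖ ^ 2 * ‖𝓕 f k‖ ^ 2)) := by
    have : (fun k : EuclideanSpace ℝ (Fin D) =>
        ‖k‖ ^ (-((D : ℝ) - 1)) * (‖h ‖k‖‖ ^ 2 * ‖𝓕 f k‖ ^ 2))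
        = fun k : EuclideanSpace ℝ (Fin D) =>
          ‖h ‖k‖‖ ^ 2 * ‖k‖ ^ (-((D : ℝ) - 1)) * ‖𝓕 f k‖ ^ 2 := by
      funext k; ring
    rw [this]; exact hfin
  have hnegint : Integrable ((fun k : EuclideanSpace ℝ (Fin D) =>
      ‖k‖ ^ (-((D : ℝ) - 1)) * (‖h ‖k‖‖ ^ 2 * ‖𝓕 f k‖ ^ 2)) ∘
      (fun k : EuclideanSpace ℝ (Fin D) => -k)) volume :=
    ((Measure.measurePreserving_neg (volume : Measure (EuclideanSpace ℝ (Fin D)))).integrable_comp_emb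
      (Homeomorph.neg (EuclideanSpace ℝ (Fin D))).measurableEmbedding).mpr hint_u
  have hcompeq : ((fun k : EuclideanSpace ℝ (Fin D) =>
      ‖k‖ ^ (-((D : ℝ) - 1)) * (‖h ‖k‖‖ ^ 2 * ‖𝓕 f k‖ ^ 2)) ∘
      (fun k : EuclideanSpace ℝ (Fin D) => -k))
      = fun k : EuclideanSpace ℝ (Fin D) =>
        ‖k‖ ^ (-((D : ℝ) - 1)) * (‖h ‖k‖‖ ^ 2 * ‖𝓕 f (-k)‖ ^ 2) := by
    funext k; simp [Function.comp, norm_neg]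
  have hint_u' : Integrable (fun k : EuclideanSpace ℝ (Fin D) =>
      ‖k‖ ^ (-((D : ℝ) - 1)) * (‖h ‖k‖‖ ^ 2 * ‖𝓕 f (-k)‖ ^ 2)) := by
    rw [← hcompeq]; exact hnegint
  obtain ⟨eq1, int1, ae1⟩ := polar_aux D hD
    (fun k => ‖h ‖k‖‖ ^ 2 * ‖𝓕 f k‖ ^ 2) hint_u
  obtain ⟨eq2, int2, ae2⟩ := polar_aux D hD
    (fun k => ‖h ‖k‖‖ ^ 2 * ‖𝓕 f (-k)‖ ^ 2) hint_u'
  have hvv' : (∫ k : EuclideanSpace ℝ (Fin D),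
      ‖k‖ ^ (-((D : ℝ) - 1)) * (‖h ‖k‖‖ ^ 2 * ‖𝓕 f (-k)‖ ^ 2))
      = ∫ k : EuclideanSpace ℝ (Fin D),
        ‖k‖ ^ (-((D : ℝ) - 1)) * (‖h ‖k‖‖ ^ 2 * ‖𝓕 f k‖ ^ 2) := by
    rw [← hcompeq]
    exact integral_neg_eq_self
      (fun k : EuclideanSpace ℝ (Fin D) => ‖k‖ ^ (-((D : ℝ) - 1)) * (‖h ‖k‖‖ ^ 2 * ‖𝓕 f k‖ ^ 2))
      (volume : Measure (EuclideanSpace ℝ (Fin D)))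
  -- a.e. splitting of the line integral
  have hae : ∀ᵐ ξ : Metric.sphere (0 : EuclideanSpace ℝ (Fin D)) 1
      ∂(volume : Measure (EuclideanSpace ℝ (Fin D))).toSphere,
      (∫ ϑ : ℝ, ‖h ϑ * 𝓕 f (ϑ • (ξ : EuclideanSpace ℝ (Fin D)))‖ ^ 2)
        = (∫ r in Ioi (0:ℝ),
            (fun k => ‖h ‖k‖‖ ^ 2 * ‖𝓕 f k‖ ^ 2) (r • (ξ : EuclideanSpace ℝ (Fin D))))
          + ∫ r in Ioi (0:ℝ),
            (fun k => ‖h ‖k‖‖ ^ 2 * ‖𝓕 f (-k)‖ ^ 2) (r • (ξ : EuclideanSpace ℝ (Fin D))) := by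
    filter_upwards [ae1, ae2] with ξ h1 h2
    set w : ℝ → ℝ := fun ϑ => ‖h ϑ * 𝓕 f (ϑ • (ξ : EuclideanSpace ℝ (Fin D)))‖ ^ 2 with hw
    have hnorm : ∀ r : ℝ, r ∈ Ioi (0:ℝ) → ‖r • (ξ : EuclideanSpace ℝ (Fin D))‖ = r := by
      intro r hr
      rw [norm_smul, Real.norm_eq_abs, abs_of_pos hr, mem_sphere_zero_iff_norm.mp ξ.2, mul_one]
    have hWu : ∀ r ∈ Ioi (0:ℝ),
        (fun k => ‖h ‖k‖‖ ^ 2 * ‖𝓕 f k‖ ^ 2) (r • (ξ : EuclideanSpace ℝ (Fin D))) = w r := by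
      intro r hr
      show ‖h ‖r • (ξ : EuclideanSpace ℝ (Fin D))‖‖ ^ 2 * ‖𝓕 f (r • (ξ : EuclideanSpace ℝ (Fin D)))‖ ^ 2
        = ‖h r * 𝓕 f (r • (ξ : EuclideanSpace ℝ (Fin D)))‖ ^ 2
      rw [norm_mul, mul_pow, hnorm r hr]
    have hWu' : ∀ r ∈ Ioi (0:ℝ),
        (fun k => ‖h ‖k‖‖ ^ 2 * ‖𝓕 f (-k)‖ ^ 2) (r • (ξ : EuclideanSpace ℝ (Fin D))) = w (-r) := by
      intro r hr
      show ‖h ‖r • (ξ : EuclideanSpace ℝ (Fin D))‖‖ ^ 2 * ‖𝓕 f (-(r • (ξ : EuclideanSpace ℝ (Fin D))))‖ ^ 2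
        = ‖h (-r) * 𝓕 f ((-r) • (ξ : EuclideanSpace ℝ (Fin D)))‖ ^ 2
      rw [norm_mul, mul_pow, hnorm r hr, heven r, neg_smul]
    have hIoi : IntegrableOn w (Ioi 0) :=
      (integrableOn_congr_fun hWu measurableSet_Ioi).mp h1
    have hIoiNeg : IntegrableOn (fun r : ℝ => w (-r)) (Ioi 0) :=
      (integrableOn_congr_fun hWu' measurableSet_Ioi).mp h2
    have hIio : IntegrableOn w (Iio 0) := by
      have hpre : (fun x : ℝ => -x) ⁻¹' (Iio 0) = Ioi 0 := by
        ext x; simp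
      refine ((Measure.measurePreserving_neg (volume : Measure ℝ)).integrableOn_comp_preimage
        (Homeomorph.neg ℝ).measurableEmbedding (f := w) (s := Iio 0)).mp ?_
      rw [hpre]
      exact hIoiNeg
    calc (∫ ϑ : ℝ, w ϑ) = ∫ ϑ in Iio (0:ℝ) ∪ Ioi (0:ℝ), w ϑ := by
          rw [Iio_union_Ioi, MeasureTheory.restrict_compl_singleton]
      _ = (∫ ϑ in Iio (0:ℝ), w ϑ) + ∫ ϑ in Ioi (0:ℝ), w ϑ :=
          setIntegral_union (Set.disjoint_left.mpr fun x (hx : x < 0) (hx' : 0 < x) => absurd (hx.trans hx') (lt_irrefl x)) measurableSet_Ioi hIio hIoi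
      _ = (∫ ϑ in Iic (0:ℝ), w ϑ) + ∫ ϑ in Ioi (0:ℝ), w ϑ := by
          rw [Measure.restrict_congr_set Iio_ae_eq_Iic]
      _ = (∫ r in Ioi (0:ℝ), w (-r)) + ∫ ϑ in Ioi (0:ℝ), w ϑ := by
          rw [integral_comp_neg_Ioi (c := 0), neg_zero]
      _ = _ := by
          rw [setIntegral_congr_fun measurableSet_Ioi hWu,
            setIntegral_congr_fun measurableSet_Ioi hWu', add_comm]
  calc (∫ ξ : Metric.sphere (0 : EuclideanSpace ℝ (Fin D)) 1,
        (∫ ϑ : ℝ, ‖h ϑ * 𝓕 f (ϑ • (ξ : EuclideanSpace ℝ (Fin D)))‖ ^ 2)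
        ∂(volume : Measure (EuclideanSpace ℝ (Fin D))).toSphere)
      = ∫ ξ : Metric.sphere (0 : EuclideanSpace ℝ (Fin D)) 1,
          ((∫ r in Ioi (0:ℝ),
            (fun k => ‖h ‖k‖‖ ^ 2 * ‖𝓕 f k‖ ^ 2) (r • (ξ : EuclideanSpace ℝ (Fin D))))
          + ∫ r in Ioi (0:ℝ),
            (fun k => ‖h ‖k‖‖ ^ 2 * ‖𝓕 f (-k)‖ ^ 2) (r • (ξ : EuclideanSpace ℝ (Fin D))))
          ∂(volume : Measure (EuclideanSpace ℝ (Fin D))).toSphere :=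
        integral_congr_ae hae
    _ = (∫ ξ : Metric.sphere (0 : EuclideanSpace ℝ (Fin D)) 1,
          (∫ r in Ioi (0:ℝ),
            (fun k => ‖h ‖k‖‖ ^ 2 * ‖𝓕 f k‖ ^ 2) (r • (ξ : EuclideanSpace ℝ (Fin D))))
          ∂(volume : Measure (EuclideanSpace ℝ (Fin D))).toSphere)
        + ∫ ξ : Metric.sphere (0 : EuclideanSpace ℝ (Fin D)) 1,
          (∫ r in Ioi (0:ℝ),
            (fun k => ‖h ‖k‖‖ ^ 2 * ‖𝓕 f (-k)‖ ^ 2) (r • (ξ : EuclideanSpace ℝ (Fin D))))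
          ∂(volume : Measure (EuclideanSpace ℝ (Fin D))).toSphere :=
        integral_add int1 int2
    _ = (∫ k : EuclideanSpace ℝ (Fin D),
          ‖k‖ ^ (-((D : ℝ) - 1)) * (‖h ‖k‖‖ ^ 2 * ‖𝓕 f k‖ ^ 2))
        + ∫ k : EuclideanSpace ℝ (Fin D),
          ‖k‖ ^ (-((D : ℝ) - 1)) * (‖h ‖k‖‖ ^ 2 * ‖𝓕 f (-k)‖ ^ 2) := by
        rw [eq1, eq2]
    _ = 2 * ∫ k : EuclideanSpace ℝ (Fin D),
          ‖h ‖k‖‖ ^ 2 * ‖k‖ ^ (-((D : ℝ) - 1)) * ‖𝓕 f k‖ ^ 2 := by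
        rw [hvv', ← two_mul]
        congr 1
        apply integral_congr_ae
        refine Filter.Eventually.of_forall fun k => ?_
        ring
end

section
/- The Fourier transform of the saturating ReLU φ(z) = max(z,0) − max(z−Δ,0), as a tempered distribution acting on Lizorkin test functions, equals −(1 − e^{−iΔk})/k²; hence its spectral penalty factor is (1/2) k⁴/(1 − cos(Δk)). -/
open MeasureTheory Complex Real Filter FourierTransform Topology

set_option maxHeartbeats 1000000

/-- The Fourier transform (convention `∫ f(z) e^{−ikz} dz`) of the saturating
ReLU `φ(z) = max(z,0) − max(z−Δ,0)`, as a tempered distribution acting on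
Lizorkin test functions (Schwartz functions all of whose derivatives vanish at
0), equals `−(1 − e^{−iΔk})/k²`; its spectral penalty factor is
`(1/2) k⁴/(1 − cos(Δk))`. -/
theorem fourier_satrelu
    (Δ : ℝ) (hΔ : 0 < Δ) :
    (∀ ψ : SchwartzMap ℝ ℂ, (∀ n : ℕ, iteratedDeriv n (⇑ψ) 0 = 0) →
      (∫ z : ℝ, ((max z 0 - max (z - Δ) 0 : ℝ) : ℂ)
          * (∫ x : ℝ, ψ x * Complex.exp (-Complex.I * (z : ℂ) * (x : ℂ))))
        = ∫ k : ℝ, (-(1 - Complex.exp (-Complex.I * (Δ : ℂ) * (k : ℂ))) / (k : ℂ) ^ 2) * ψ k)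
    ∧ ∀ k : ℝ, Real.cos (Δ * k) ≠ 1 →
      (‖-(1 - Complex.exp (-Complex.I * (Δ : ℂ) * (k : ℂ))) / (k : ℂ) ^ 2‖⁻¹) ^ 2
        = (1 / 2) * k ^ 4 / (1 - Real.cos (Δ * k)) := by
  constructor
  ·
    intro ψ hψ
    have hπ : (0:ℝ) < 2 * π := by positivity
    have hπc : ((2*π : ℝ) : ℂ) ≠ 0 := Complex.ofReal_ne_zero.2 hπ.ne'
    -- basic vanishing facts
    have hψ0 : ψ 0 = 0 := by simpa using hψ 0
    have hψ1 : deriv (⇑ψ) 0 = 0 := by simpa [iteratedDeriv_one] using hψ 1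
    -- the rescaling identity
    have E1 : ∀ (h : ℝ → ℂ) (z : ℝ),
        (∫ k : ℝ, h k * Complex.exp (-Complex.I * (z:ℂ) * (k:ℂ))) = 𝓕 h (z / (2*π)) := by
      intro h z
      rw [Real.fourier_real_eq_integral_exp_smul]
      congr 1; ext k
      rw [smul_eq_mul, mul_comm]
      congr 2
      have : (-2 * π * k * (z / (2*π)) : ℝ) = -(z * k) := by field_simp
      rw [this]; push_cast; ring
    -- the Lizorkin quotient
    set χ : ℝ → ℂ := fun k => ψ k / (k:ℂ)^2 with hχdef
    have hχ2 : ∀ k : ℝ, ((k:ℂ))^2 * χ k = ψ k := by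
      intro k
      by_cases hk : k = 0
      · subst hk; simp [hχdef, hψ0]
      · rw [hχdef, mul_comm, div_mul_cancel₀]
        exact pow_ne_zero _ (Complex.ofReal_ne_zero.2 hk)
    have hχ0 : χ 0 = 0 := by simp [hχdef, hψ0]
    -- bounds
    obtain ⟨C2, hC2pos, hC2⟩ := ψ.decay 0 2
    obtain ⟨C4, hC4pos, hC4⟩ := ψ.decay 4 0
    have hC2nn : 0 ≤ C2 := hC2pos.le
    have hC4nn : 0 ≤ C4 := hC4pos.le
    have hsmooth : ContDiff ℝ (⊤:ℕ∞) (⇑ψ) := ψ.smooth ⊤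
    have hd1 : Differentiable ℝ (⇑ψ) := ψ.differentiable
    have hd2 : ContDiff ℝ (⊤:ℕ∞) (deriv (⇑ψ)) := (contDiff_infty_iff_deriv.mp hsmooth).2
    have hD2b : ∀ x : ℝ, ‖deriv (deriv (⇑ψ)) x‖ ≤ C2 := by
      intro x
      have h := hC2 x
      simp only [pow_zero, one_mul] at h
      rw [norm_iteratedFDeriv_eq_norm_iteratedDeriv] at h
      have : iteratedDeriv 2 (⇑ψ) x = deriv (deriv (⇑ψ)) x := by
        rw [show (2:ℕ) = 1 + 1 from rfl, iteratedDeriv_succ, iteratedDeriv_one]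
      rwa [this] at h
    have hDbound : ∀ t : ℝ, ‖deriv (⇑ψ) t‖ ≤ C2 * |t| := by
      intro t
      have := Convex.norm_image_sub_le_of_norm_deriv_le (s := Set.univ) (f := deriv (⇑ψ))
        (fun x _ => (hd2.differentiable (by simp)) x) (fun x _ => hD2b x) convex_univ
        (Set.mem_univ 0) (Set.mem_univ t)
      simpa [hψ1, Real.norm_eq_abs] using this
    have hψk : ∀ k : ℝ, ‖ψ k‖ ≤ C2 * k^2 := by
      intro k
      have hFTC : ∫ x in (0:ℝ)..k, deriv (⇑ψ) x = ψ k - ψ 0 :=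
        intervalIntegral.integral_deriv_eq_sub (fun x _ => hd1 x)
          ((hd2.continuous).intervalIntegrable _ _)
      have hb : ∀ x ∈ Set.uIoc (0:ℝ) k, ‖deriv (⇑ψ) x‖ ≤ C2 * |k| := by
        intro x hx
        refine (hDbound x).trans ?_
        have h1 := hx.1; have h2 := hx.2
        have : |x| ≤ |k| := by
          rcases le_total 0 k with h | h
          · rw [min_eq_left h] at h1; rw [max_eq_right h] at h2
            rw [_root_.abs_of_pos h1, _root_.abs_of_nonneg h]; exact h2
          · rw [min_eq_right h] at h1; rw [max_eq_left h] at h2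
            rw [_root_.abs_of_nonpos h2, _root_.abs_of_nonpos h]; linarith
        nlinarith [abs_nonneg x]
      have := intervalIntegral.norm_integral_le_of_norm_le_const hb
      rw [hFTC] at this
      simp only [hψ0, sub_zero, sub_zero] at this
      calc ‖ψ k‖ ≤ C2 * |k| * |k| := this
        _ = C2 * k^2 := by rw [mul_assoc, abs_mul_abs_self k, sq]
    have hχnorm : ∀ k : ℝ, ‖χ k‖ = ‖ψ k‖ / k^2 := by
      intro k
      rw [hχdef]
      rw [norm_div, norm_pow, Complex.norm_real, Real.norm_eq_abs, _root_.sq_abs]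
    have hkey : ∀ k : ℝ, (1 + k^2) * (max 1 |k| * ‖χ k‖) ≤ 2 * (C2 + C4) := by
      intro k
      rcases le_total |k| 1 with h | h
      · rw [max_eq_left h]
        have hk2 : k^2 ≤ 1 := by rw [← _root_.sq_abs]; nlinarith [abs_nonneg k]
        have hχle : ‖χ k‖ ≤ C2 := by
          by_cases hk0 : k = 0
          · subst hk0; simp [hχ0, hC2nn]
          · rw [hχnorm k, div_le_iff₀ (by positivity)]
            exact hψk k
        nlinarith [norm_nonneg (χ k)]
      · rw [max_eq_right h]
        have hk0 : k ≠ 0 := by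
          intro hk0
          rw [hk0, abs_zero] at h
          linarith
        have hk2pos : (0:ℝ) < k^2 := by positivity
        have h4 : |k|^4 * ‖ψ k‖ ≤ C4 := by
          have := hC4 k
          simpa [Real.norm_eq_abs, norm_iteratedFDeriv_zero] using this
        have hP : (0:ℝ) ≤ ‖ψ k‖ := norm_nonneg _
        rw [hχnorm k]
        rw [show (1 + k^2) * (|k| * (‖ψ k‖ / k^2)) = ((1 + k^2) * |k| * ‖ψ k‖)/k^2 by ring,
          div_le_iff₀ hk2pos]
        have hk2a : k^2 = |k|^2 := (_root_.sq_abs k).symm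
        have hpow1 : |k| ≤ |k|^4 := le_self_pow₀ h (by norm_num)
        have hpow3 : |k|^3 ≤ |k|^4 := pow_le_pow_right₀ h (by norm_num)
        have e1 : |k| * ‖ψ k‖ ≤ C4 := le_trans (mul_le_mul_of_nonneg_right hpow1 hP) h4
        have e2 : |k|^3 * ‖ψ k‖ ≤ C4 := le_trans (mul_le_mul_of_nonneg_right hpow3 hP) h4
        have hk1 : (1:ℝ) ≤ k^2 := by rw [hk2a]; nlinarith
        have hstep : (1 + k^2) * |k| * ‖ψ k‖ = |k| * ‖ψ k‖ + |k|^3 * ‖ψ k‖ := by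
          rw [hk2a]; ring
        rw [hstep]
        have h2 : 2*(C2+C4) ≤ 2*(C2+C4)*k^2 := by nlinarith
        linarith
    have hbb : ∀ k : ℝ, ‖χ k‖ ≤ (2*(C2+C4)) * (1+k^2)⁻¹ ∧
        ‖(k:ℝ) • χ k‖ ≤ (2*(C2+C4)) * (1+k^2)⁻¹ := by
      intro k
      have hpos : (0:ℝ) < 1 + k^2 := by positivity
      have hm1 : (1:ℝ) ≤ max 1 |k| := le_max_left _ _
      have hm2 : |k| ≤ max 1 |k| := le_max_right _ _
      have hn : (0:ℝ) ≤ ‖χ k‖ := norm_nonneg _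
      have hk := hkey k
      constructor
      · rw [← div_eq_mul_inv, le_div_iff₀ hpos]
        nlinarith
      · rw [norm_smul, Real.norm_eq_abs, ← div_eq_mul_inv, le_div_iff₀ hpos]
        nlinarith [abs_nonneg k]
    have hχmeas : AEStronglyMeasurable χ volume := by
      apply Measurable.aestronglyMeasurable
      exact ψ.continuous.measurable.div ((Complex.continuous_ofReal.pow 2).measurable)
    have hdom : Integrable (fun k : ℝ => (2*(C2+C4)) * (1+k^2)⁻¹) :=
      integrable_inv_one_add_sq.const_mul _
    have hχint : Integrable χ :=
      hdom.mono' hχmeas (ae_of_all _ fun k => (hbb k).1)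
    have hkχint : Integrable (fun k : ℝ => (k:ℝ) • χ k) :=
      hdom.mono' (aestronglyMeasurable_id.smul hχmeas) (ae_of_all _ fun k => (hbb k).2)
    -- Fourier transform derivatives
    set χ₁ : ℝ → ℂ := fun x : ℝ => (-2 * ↑π * Complex.I * ↑x) • χ x with hχ₁def
    have hχ₁int : Integrable χ₁ := by
      have : χ₁ = (-2 * ↑π * Complex.I) • (fun x : ℝ => (x:ℝ) • χ x) := by
        ext x
        simp only [hχ₁def, Pi.smul_apply, smul_eq_mul, Complex.real_smul]; ring
      rw [this]; exact hkχint.smul _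
    have hxχ₁int : Integrable (fun x : ℝ => (x:ℝ) • χ₁ x) := by
      have : (fun x : ℝ => (x:ℝ) • χ₁ x) = (-2 * ↑π * Complex.I) • (⇑ψ) := by
        ext x
        simp only [hχ₁def, Pi.smul_apply, smul_eq_mul, Complex.real_smul]
        rw [← hχ2 x]; ring
      rw [this]; exact ψ.integrable.smul _
    have hD1 : ∀ w : ℝ, HasDerivAt (𝓕 χ) (𝓕 χ₁ w) w := fun w =>
      Real.hasDerivAt_fourier hχint hkχint w
    have hCsmul : ∀ (c : ℂ) (f : ℝ → ℂ) (w : ℝ), 𝓕 (fun x => c • f x) w = c • 𝓕 f w := by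
      intro c f w
      rw [Real.fourier_real_eq_integral_exp_smul,
        Real.fourier_real_eq_integral_exp_smul, ← integral_smul]
      congr 1; ext v; rw [smul_comm]
    set W : ℝ → ℂ := 𝓕 (⇑ψ) with hWdef
    have hD2 : ∀ w : ℝ, HasDerivAt (𝓕 χ₁) ((-4*π^2 : ℂ) • W w) w := by
      intro w
      have h := Real.hasDerivAt_fourier hχ₁int hxχ₁int w
      have funeq : (fun x : ℝ => (-2 * ↑π * Complex.I * ↑x) • χ₁ x)
          = fun x => (-4*π^2 : ℂ) • ψ x := by
        ext x
        simp only [hχ₁def, smul_eq_mul]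
        rw [← hχ2 x]
        linear_combination (4*(π:ℂ)^2*((x:ℂ))^2*χ x) * Complex.I_sq
      rw [funeq] at h
      rw [hCsmul] at h
      exact h
    have hWsch : ⇑(SchwartzMap.fourierTransformCLM ℂ ψ) = W :=
      by rw [SchwartzMap.fourierTransformCLM_apply]; rfl
    have hWint : Integrable W := by
      rw [← hWsch]; exact (SchwartzMap.fourierTransformCLM ℂ ψ).integrable
    have hWcont : Continuous W := by
      rw [← hWsch]; exact (SchwartzMap.fourierTransformCLM ℂ ψ).continuous
    have hG1cont : Continuous (𝓕 χ₁) := by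
      have : Differentiable ℝ (𝓕 χ₁) := fun x => (hD2 x).differentiableAt
      exact this.continuous
    have hRL : Tendsto (𝓕 χ₁) atTop (𝓝 0) := by
      refine (Real.zero_at_infty_fourier χ₁).mono_left ?_
      exact atTop_le_cocompact
    -- set-up: Δ', the bounded factor, and q
    set Δ' : ℝ := Δ / (2*π) with hΔ'def
    have hΔ'pos : 0 < Δ' := by positivity
    have hπC : (π:ℂ) ≠ 0 := Complex.ofReal_ne_zero.2 Real.pi_ne_zero
    have hΔc : (Δ:ℂ) = ((2*π:ℝ):ℂ) * (Δ':ℂ) := by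
      rw [hΔ'def]; push_cast; field_simp
    set φc : ℝ → ℂ := fun y => ((max y 0 - max (y - Δ) 0 : ℝ) : ℂ) with hφdef
    have hφcont : Continuous φc := by
      apply Complex.continuous_ofReal.comp
      exact (continuous_id.max continuous_const).sub
        ((continuous_id.sub continuous_const).max continuous_const)
    have hφbdd : ∀ y : ℝ, ‖φc y‖ ≤ Δ := by
      intro y
      rw [hφdef, Complex.norm_real, Real.norm_eq_abs, abs_le]
      constructor
      · have : max (y - Δ) 0 ≤ max y 0 :=
          max_le_max (by linarith) le_rfl
        linarith
      · have : max y 0 ≤ Δ + max (y - Δ) 0 :=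
          max_le (by linarith [le_max_left (y - Δ) 0]) (by linarith [le_max_right (y - Δ) 0])
        linarith
    set q : ℝ → ℂ := fun u => φc (2*π*u) * W u with hqdef
    have hqint : Integrable q := by
      apply hWint.bdd_mul (hφcont.comp (continuous_const.mul continuous_id)).aestronglyMeasurable
      exact ae_of_all _ fun u => hφbdd _
    -- rewrite the LHS
    have hLHS1 : (∫ z : ℝ, ((max z 0 - max (z - Δ) 0 : ℝ) : ℂ)
          * (∫ x : ℝ, ψ x * Complex.exp (-Complex.I * (z : ℂ) * (x : ℂ))))
        = ∫ z : ℝ, q (z / (2*π)) := by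
      congr 1; ext z
      rw [E1 (⇑ψ) z]
      simp only [hqdef, hφdef]
      have h2 : 2*π*(z/(2*π)) = z := by field_simp
      rw [h2]
    have hLHS2 : (∫ z : ℝ, q (z / (2*π))) = (2*π) • ∫ u, q u := by
      rw [MeasureTheory.Measure.integral_comp_div q (2*π), abs_of_pos hπ]
    -- split the integral of q
    have hsplit0 : ∫ u, q u = ∫ u in Set.Ioi (0:ℝ), q u := by
      rw [← integral_add_compl measurableSet_Iic hqint, Set.compl_Iic]
      have : ∫ u in Set.Iic (0:ℝ), q u = 0 := by
        apply setIntegral_eq_zero_of_forall_eq_zero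
        intro u hu
        have hu0 : u ≤ 0 := hu
        have h1 : max (2*π*u) 0 = 0 := max_eq_right (by nlinarith)
        have h2 : max (2*π*u - Δ) 0 = 0 := max_eq_right (by nlinarith)
        rw [hqdef]
        simp [hφdef, h1, h2]
      rw [this, zero_add]
    have hsplit1 : ∫ u in Set.Ioi (0:ℝ), q u
        = (∫ u in Set.Ioc (0:ℝ) Δ', q u) + ∫ u in Set.Ioi Δ', q u := by
      rw [← Set.Ioc_union_Ioi_eq_Ioi hΔ'pos.le]
      exact setIntegral_union Set.Ioc_disjoint_Ioi_same measurableSet_Ioi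
        hqint.integrableOn hqint.integrableOn
    -- the tail piece
    set IW : ℂ := ∫ u in Set.Ioi Δ', W u with hIWdef
    have htail : ∫ u in Set.Ioi Δ', q u = (Δ:ℂ) * IW := by
      have : ∀ u ∈ Set.Ioi Δ', q u = (Δ:ℂ) * W u := by
        intro u hu
        have hu' : Δ' < u := hu
        have h2πu : Δ < 2*π*u := by
          have := (div_lt_iff₀ hπ).mp hu'
          linarith [this]
        have h1 : max (2*π*u) 0 = 2*π*u := max_eq_left (by linarith)
        have h2 : max (2*π*u - Δ) 0 = 2*π*u - Δ := max_eq_left (by linarith)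
        rw [hqdef]
        simp only [hφdef, h1, h2]
        push_cast; ring
      rw [setIntegral_congr_fun measurableSet_Ioi this]
      simp_rw [← smul_eq_mul]
      rw [integral_smul]
    have htailval : (-4*π^2 : ℂ) * IW = - 𝓕 χ₁ Δ' := by
      have h := integral_Ioi_of_hasDerivAt_of_tendsto' (f := 𝓕 χ₁)
        (f' := fun u => (-4*π^2 : ℂ) • W u) (a := Δ')
        (fun x _ => hD2 x) ((hWint.smul ((-4:ℂ)*π^2)).integrableOn.congr_fun ?mm measurableSet_Ioi) hRL
      case mm => intro x _; norm_num
      rw [integral_smul] at h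
      rw [smul_eq_mul] at h
      rw [hIWdef, h, zero_sub]
    -- the interval piece
    set K : ℂ := ∫ x in (0:ℝ)..Δ', ((2*π*x : ℝ):ℂ) * W x with hKdef
    have hmid : ∫ u in Set.Ioc (0:ℝ) Δ', q u = K := by
      have hcg : ∀ u ∈ Set.Ioc (0:ℝ) Δ', q u = ((2*π*u : ℝ):ℂ) * W u := by
        intro u hu
        have hu1 : 0 < u := hu.1
        have hu2 : u ≤ Δ' := hu.2
        have h2πu : 2*π*u ≤ Δ := by
          have := (le_div_iff₀ hπ).mp hu2
          linarith
        have h1 : max (2*π*u) 0 = 2*π*u := max_eq_left (by nlinarith)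
        have h2 : max (2*π*u - Δ) 0 = 0 := max_eq_right (by linarith)
        rw [hqdef]
        simp only [hφdef, h1, h2]
        push_cast; ring
      rw [setIntegral_congr_fun measurableSet_Ioc hcg, hKdef,
        intervalIntegral.integral_of_le hΔ'pos.le]
    have hFTC2 : ∫ x in (0:ℝ)..Δ', 𝓕 χ₁ x = 𝓕 χ Δ' - 𝓕 χ 0 :=
      intervalIntegral.integral_eq_sub_of_hasDerivAt (fun x _ => hD1 x)
        (hG1cont.intervalIntegrable _ _)
    have hIBP : (-4*π^2 : ℂ) * K
        = ((2*π*Δ' : ℝ):ℂ) * 𝓕 χ₁ Δ' - ((2*π:ℝ):ℂ) * (𝓕 χ Δ' - 𝓕 χ 0) := by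
      have hu : ∀ x ∈ Set.uIcc (0:ℝ) Δ', HasDerivAt (fun y : ℝ => ((2*π*y : ℝ):ℂ))
          (((2*π:ℝ):ℂ)) x := by
        intro x _
        have h1 : HasDerivAt (fun y : ℝ => (y:ℂ)) 1 x := Complex.ofRealCLM.hasDerivAt
        have h2 := h1.const_mul ((2*π:ℝ):ℂ)
        simp only [mul_one] at h2
        exact h2.congr_of_eventuallyEq (Filter.Eventually.of_forall fun y => Complex.ofReal_mul _ _)
      have h := intervalIntegral.integral_mul_deriv_eq_deriv_mul hu
        (fun x _ => hD2 x)
        (intervalIntegrable_const)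
        ((hWcont.const_smul ((-4*π^2 : ℂ))).intervalIntegrable _ _)
      have hpull : ∫ x in (0:ℝ)..Δ', ((2*π*x : ℝ):ℂ) * ((-4*π^2 : ℂ) • W x)
          = (-4*π^2 : ℂ) * K := by
        rw [hKdef, ← intervalIntegral.integral_const_mul]
        apply intervalIntegral.integral_congr
        intro x _
        simp only [smul_eq_mul]
        ring
      rw [hpull] at h
      rw [h, intervalIntegral.integral_const_mul, hFTC2]
      push_cast
      ring
    -- RHS
    have hRHS : (∫ k : ℝ, (-(1 - Complex.exp (-Complex.I * (Δ : ℂ) * (k : ℂ))) / (k : ℂ) ^ 2) * ψ k)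
        = 𝓕 χ Δ' - 𝓕 χ 0 := by
      have hfun : (fun k : ℝ => (-(1 - Complex.exp (-Complex.I * (Δ : ℂ) * (k : ℂ))) / (k : ℂ) ^ 2) * ψ k)
          = fun k : ℝ => χ k * Complex.exp (-Complex.I * (Δ:ℂ) * (k:ℂ)) - χ k := by
        ext k
        by_cases hk : k = 0
        · subst hk
          simp [hχ0, hψ0]
        · have hk2 : ((k:ℂ))^2 ≠ 0 := pow_ne_zero _ (Complex.ofReal_ne_zero.2 hk)
          rw [hχdef]
          field_simp
          ring
      rw [hfun]
      have hexpint : Integrable (fun k : ℝ => χ k * Complex.exp (-Complex.I * (Δ:ℂ) * (k:ℂ))) := by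
        have : (fun k : ℝ => χ k * Complex.exp (-Complex.I * (Δ:ℂ) * (k:ℂ)))
            = fun k : ℝ => Complex.exp (-Complex.I * (Δ:ℂ) * (k:ℂ)) * χ k := by
          ext k; ring
        rw [this]
        apply hχint.bdd_mul
        · apply Continuous.aestronglyMeasurable
          apply Complex.continuous_exp.comp
          fun_prop
        · refine ae_of_all _ fun k => ?_
          have : -Complex.I * (Δ:ℂ) * (k:ℂ) = ((-(Δ*k) : ℝ):ℂ) * Complex.I := by
            push_cast; ring
          rw [this, Complex.norm_exp_ofReal_mul_I]
      rw [integral_sub hexpint hχint]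
      congr 1
      · rw [E1 χ Δ]
      · have := E1 χ 0
        simp only [Complex.ofReal_zero, mul_zero, zero_mul, neg_mul, zero_div] at this
        rw [← this]
        congr 1; ext k
        simp
    -- assemble
    rw [hLHS1, hLHS2, hsplit0, hsplit1, htail, hmid, hRHS]
    have hsm : (2*π : ℝ) • (K + (Δ:ℂ) * IW) = ((2*π:ℝ):ℂ) * (K + (Δ:ℂ) * IW) :=
      Complex.real_smul
    rw [hsm]
    rw [hΔc]
    push_cast at hIBP htailval hΔc ⊢
    have hc0 : (-4*(π:ℂ)^2) ≠ 0 := by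
      apply mul_ne_zero (by norm_num : (-4:ℂ) ≠ 0) (pow_ne_zero 2 hπC)
    apply mul_left_cancel₀ hc0
    linear_combination (2*(π:ℂ)) * hIBP + (4*(π:ℂ)^2*(Δ':ℂ)) * htailval

  ·
    intro k hk
    have hk0 : k ≠ 0 := by
      rintro rfl; simp at hk
    set c := Real.cos (Δ * k) with hc
    set s := Real.sin (Δ * k) with hs
    have hc1 : c < 1 := lt_of_le_of_ne (Real.cos_le_one _) hk
    have he : Complex.exp (-Complex.I * (Δ : ℂ) * (k : ℂ)) = (c : ℂ) + (-s : ℝ) * Complex.I := by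
      have : -Complex.I * (Δ : ℂ) * (k : ℂ) = ((-(Δ * k) : ℝ) : ℂ) * Complex.I := by
        push_cast; ring
      rw [this, Complex.exp_mul_I]
      rw [← Complex.ofReal_cos, ← Complex.ofReal_sin, Real.cos_neg, Real.sin_neg]
    have hnum : ‖-(1 - Complex.exp (-Complex.I * (Δ : ℂ) * (k : ℂ)))‖ ^ 2 = 2 - 2 * c := by
      rw [he]
      have : -(1 - ((c : ℂ) + (-s : ℝ) * Complex.I)) = ((c - 1 : ℝ) : ℂ) + ((-s : ℝ) : ℂ) * Complex.I := by
        push_cast; ring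
      rw [this, Complex.sq_norm, Complex.normSq_add_mul_I]
      have := Real.sin_sq_add_cos_sq (Δ * k)
      nlinarith [this]
    have hnn : (0:ℝ) < 2 - 2 * c := by linarith
    rw [norm_div]
    have hk2 : ‖((k:ℂ))^2‖ = k ^ 2 := by
      rw [norm_pow, Complex.norm_real, Real.norm_eq_abs, _root_.sq_abs]
    rw [hk2, inv_div, div_pow, hnum]
    have hk4 : (k^2)^2 = k^4 := by ring
    rw [hk4]
    rw [div_eq_div_iff (by linarith) (by linarith)]
    ring
end
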